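/- For every integer j ≥ 2, V_{j−1} = (1/2)·[ ((2j−3)!!/(2j)!!)·(γ^j + γ^{−j}) − Σ_{p=1}^{j−1} ((2p−3)!!/(2p)!!)·((2j−2p−3)!!/(2j−2p)!!)·γ^{2p−j} ], where γ = 3 − 2√2. -/

import Mathlib

open Finset
open scoped Nat

noncomputable def gam : ℝ := 3 - 2 * Real.sqrt 2
noncomputable def gam' : ℝ := 3 + 2 * Real.sqrt 2

lemma gam_mul_gam' : gam * gam' = 1 := by
  have h : Real.sqrt 2 * Real.sqrt 2 = 2 := Real.mul_self_sqrt (by norm_num)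
  unfold gam gam'; nlinarith

lemma gam_pos : 0 < gam := by
  have h : Real.sqrt 2 < 1.5 := by
    nlinarith [Real.sq_sqrt (show (2:ℝ) ≥ 0 by norm_num), Real.sqrt_nonneg 2]
  unfold gam; nlinarith

lemma gam_ne : gam ≠ 0 := ne_of_gt gam_pos

lemma gam'_eq_inv : gam' = gam⁻¹ := eq_inv_of_mul_eq_one_right (mul_comm gam gam' ▸ gam_mul_gam')

lemma gam_add_gam' : gam + gam' = 6 := by unfold gam gam'; ring

noncomputable def cc : ℕ → ℝ := fun n =>
  if n = 0 then 1 else -((catalan (n-1) : ℝ) / 2 ^ (2*n-1))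

lemma cc_zero : cc 0 = 1 := rfl
lemma cc_one : cc 1 = -(1/2) := by simp [cc]

lemma segner (n : ℕ) (hn : 2 ≤ n) : ∑ p ∈ Finset.range (n+1), cc p * cc (n - p) = 0 := by
  obtain ⟨m, rfl⟩ : ∃ m, n = m + 2 := ⟨n - 2, by omega⟩
  rw [Finset.sum_range_succ, Finset.sum_range_succ']
  have h1 : ∀ i ∈ Finset.range (m+1), cc (i+1) * cc (m + 2 - (i+1))
      = (catalan i : ℝ) * (catalan (m - i)) / 2 ^ (2*m+2) := by
    intro i hi
    simp only [Finset.mem_range] at hi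
    have h2 : m + 2 - (i+1) = (m - i) + 1 := by omega
    rw [h2]
    simp only [cc, if_neg (Nat.succ_ne_zero _)]
    have e1 : 2*(i+1)-1 = 2*i+1 := by omega
    have e2 : 2*((m-i)+1)-1 = 2*(m-i)+1 := by omega
    rw [e1, e2]
    have e3 : (2:ℝ) ^ (2*i+1) * 2 ^ (2*(m-i)+1) = 2 ^ (2*m+2) := by
      rw [← pow_add]; congr 1; omega
    rw [neg_mul_neg, div_mul_div_comm, e3]
    simp
  rw [Finset.sum_congr rfl h1]
  rw [← Finset.sum_div]
  have hc : ∑ i ∈ Finset.range (m+1), (catalan i : ℝ) * (catalan (m - i))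
      = (catalan (m+1) : ℝ) := by
    rw [catalan_succ]
    push_cast [Finset.sum_range]
    rfl
  rw [hc]
  have h0 : cc 0 * cc (m+2-0) = -((catalan (m+1) : ℝ) / 2 ^ (2*m+3)) := by
    simp only [Nat.sub_zero, cc_zero, one_mul, cc, if_neg (Nat.succ_ne_zero _)]
    norm_num
    congr 2
  have h2 : cc (m+2) * cc (m+2 - (m+2)) = -((catalan (m+1) : ℝ) / 2 ^ (2*m+3)) := by
    simp only [Nat.sub_self, cc_zero, mul_one, cc, if_neg (Nat.succ_ne_zero _)]
    norm_num
    congr 2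
  rw [h0, h2]
  have : (2:ℝ)^(2*m+3) = 2 * 2^(2*m+2) := by rw [pow_succ]; ring
  rw [this]
  field_simp
  ring

open PowerSeries

noncomputable def Sser (b : ℝ) : PowerSeries ℝ := PowerSeries.mk fun n => cc n * b ^ n

lemma coeff_mul_range (f1 f2 : PowerSeries ℝ) (n : ℕ) :
    PowerSeries.coeff n (f1 * f2)
      = ∑ k ∈ Finset.range (n+1), PowerSeries.coeff k f1 * PowerSeries.coeff (n-k) f2 := by
  rw [PowerSeries.coeff_mul]
  exact Finset.Nat.sum_antidiagonal_eq_sum_range_succ_mk _ n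

lemma coeff_S_sq (b : ℝ) (n : ℕ) :
    PowerSeries.coeff n (Sser b * Sser b)
      = (if n = 0 then 1 else if n = 1 then -b else 0) := by
  rw [coeff_mul_range]
  simp only [Sser, PowerSeries.coeff_mk]
  have h : ∀ k ∈ Finset.range (n+1),
      cc k * b ^ k * (cc (n-k) * b ^ (n-k)) = b ^ n * (cc k * cc (n-k)) := by
    intro k hk
    simp only [Finset.mem_range] at hk
    have : b ^ k * b ^ (n-k) = b ^ n := by rw [← pow_add]; congr 1; omega
    rw [← this]; ring
  rw [Finset.sum_congr rfl h, ← Finset.mul_sum]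
  rcases Nat.lt_or_ge n 2 with h2 | h2
  · interval_cases n
    · simp [cc_zero]
    · simp [Finset.sum_range_succ, cc_zero, cc_one]; ring
  · rw [segner n h2]
    have : n ≠ 0 := by omega
    have : ¬ (n = 0) := by omega
    simp only [if_neg this, if_neg (show ¬ (n = 1) by omega), mul_zero]

noncomputable def T : ℕ → ℝ := fun n => PowerSeries.coeff n (Sser gam * Sser gam')

lemma T_conv (n : ℕ) :
    ∑ k ∈ Finset.range (n+1), T k * T (n-k)
      = PowerSeries.coeff n ((Sser gam * Sser gam') * (Sser gam * Sser gam')) := by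
  rw [coeff_mul_range]; rfl

lemma coeff_RR (n : ℕ) (hn : 3 ≤ n) :
    PowerSeries.coeff n ((Sser gam * Sser gam') * (Sser gam * Sser gam')) = 0 := by
  have hassoc : (Sser gam * Sser gam') * (Sser gam * Sser gam')
      = (Sser gam * Sser gam) * (Sser gam' * Sser gam') := by ring
  rw [hassoc, coeff_mul_range]
  apply Finset.sum_eq_zero
  intro k hk
  simp only [Finset.mem_range] at hk
  rw [coeff_S_sq, coeff_S_sq]
  rcases Nat.lt_or_ge k 2 with h | h
  · have : ¬ (n - k = 0) ∧ ¬ (n - k = 1) := by omega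
    rw [if_neg this.1, if_neg this.2, mul_zero]
  · rw [if_neg (by omega : ¬ k = 0), if_neg (by omega : ¬ k = 1), zero_mul]

lemma T_zero : T 0 = 1 := by
  simp [T, coeff_mul_range, Sser, cc_zero]

lemma T_one : T 1 = -3 := by
  have h6 := gam_add_gam'
  simp [T, coeff_mul_range, Finset.sum_range_succ, Sser, cc_zero, cc_one]
  nlinarith

lemma cc_two : cc 2 = -(1/8) := by norm_num [cc]

lemma T_two : T 2 = -4 := by
  have h6 := gam_add_gam'
  have h1 := gam_mul_gam'
  simp [T, coeff_mul_range, Finset.sum_range_succ, Sser, cc_zero, cc_one, cc_two]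
  nlinarith

lemma T_eq_V (V : ℕ → ℝ) (hV0 : V 0 = 1)
    (hVrec : ∀ j : ℕ, V (j + 1) = (∑ i ∈ Finset.range (j + 1), V i * V (j - i)) + V j) :
    ∀ n : ℕ, 1 ≤ n → T (n+1) = -2 * V n := by
  intro n
  induction n using Nat.strong_induction_on with
  | _ n IH =>
    intro hn
    rcases Nat.lt_or_ge n 2 with h | h
    · interval_cases n
      have hV1 : V 1 = 2 := by
        have h := hVrec 0
        simp [Finset.sum_range_one, hV0] at h
        linarith
      rw [T_two, hV1]; norm_num
    · obtain ⟨m, rfl⟩ : ∃ m, n = m + 2 := ⟨n-2, by omega⟩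
      have h0 := coeff_RR (m+3) (by omega)
      rw [← T_conv] at h0
      have e1 : ∑ k ∈ Finset.range (m+3+1), T k * T (m+3-k)
          = (∑ k ∈ Finset.range m, T (k+2) * T (m+3-(k+2)))
            + T (m+2) * T (m+3-(m+1+1)) + T (m+1+1+1) * T (m+3-(m+2+1))
            + T (0+1) * T (m+3-(0+1)) + T 0 * T (m+3-0) := by
        rw [Finset.sum_range_succ' (fun k => T k * T (m+3-k)) (m+3)]
        rw [Finset.sum_range_succ' (fun k => T (k+1) * T (m+3-(k+1))) (m+2)]
        rw [Finset.sum_range_succ (fun k => T (k+1+1) * T (m+3-(k+1+1))) (m+1)]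
        rw [Finset.sum_range_succ (fun k => T (k+1+1) * T (m+3-(k+1+1))) m]
      have e2 : ∀ k ∈ Finset.range m, T (k+2) * T (m+3-(k+2)) = 4 * (V (k+1) * V (m-k)) := by
        intro k hk; simp only [Finset.mem_range] at hk
        have h1 : T (k+1+1) = -2 * V (k+1) := IH (k+1) (by omega) (by omega)
        have hidx : m+3-(k+2) = (m-k)+1 := by omega
        have h2 : T ((m-k)+1) = -2 * V (m-k) := IH (m-k) (by omega) (by omega)
        rw [show k+2 = k+1+1 from rfl, h1, hidx, h2]; ring
      have e3 : ∑ k ∈ Finset.range m, V (k+1) * V (m-k) = V (m+2) - 3 * V (m+1) := by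
        have h := hVrec (m+1)
        rw [Finset.sum_range_succ' (fun i => V i * V (m+1-i)) (m+1)] at h
        rw [Finset.sum_range_succ (fun i => V (i+1) * V (m+1-(i+1))) m] at h
        have hc : ∀ k ∈ Finset.range m, V (k+1) * V (m+1-(k+1)) = V (k+1) * V (m-k) := by
          intro k hk; simp only [Finset.mem_range] at hk; congr 2; omega
        rw [Finset.sum_congr rfl hc] at h
        have i1 : m+1-(m+1) = 0 := by omega
        have i2 : m+1-0 = m+1 := by omega
        rw [i1, i2, hV0] at h
        linarith
      have hT2 : T (m+1+1) = -2 * V (m+1) := IH (m+1) (by omega) (by omega)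
      rw [e1, Finset.sum_congr rfl e2, ← Finset.mul_sum, e3] at h0
      have i3 : m+3-(m+1+1) = 1 := by omega
      have i4 : m+3-(m+2+1) = 0 := by omega
      have i5 : m+3-(0+1) = m+1+1 := by omega
      have i6 : m+3-0 = m+1+1+1 := by omega
      rw [i3, i4, i5, i6, T_zero, T_one, hT2] at h0
      show T (m+1+1+1) = -2 * V (m+2)
      linarith

lemma catkey (m : ℕ) : catalan m * (2*m+2)‼ = (2*m-1)‼ * 2^(2*m+1) := by
  cases m with
  | zero => simp [Nat.doubleFactorial]
  | succ k =>
    set m := k + 1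
    have h1 : (m+1) * catalan m = Nat.centralBinom m := succ_mul_catalan_eq_centralBinom m
    have h2 : Nat.centralBinom m * (Nat.factorial m * Nat.factorial m) = (2*m)! := by
      have := Nat.choose_mul_factorial_mul_factorial (show m ≤ 2*m by omega)
      rw [Nat.centralBinom_eq_two_mul_choose]
      have h2m : 2*m - m = m := by omega
      rw [h2m] at this
      rw [← this]; ring
    have h3 : Nat.factorial (2*m) = (2*m)‼ * (2*m-1)‼ := by
      have e : 2*m = (2*m-1) + 1 := by omega
      rw [e, Nat.factorial_eq_mul_doubleFactorial]
      simp
    have h4 : (2*m)‼ = 2^m * Nat.factorial m := Nat.doubleFactorial_two_mul m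
    have h5 : (2*m+2)‼ = (2*m+2) * (2*m)‼ := Nat.doubleFactorial_add_two _
    apply Nat.eq_of_mul_eq_mul_right (Nat.factorial_pos m)
    calc catalan m * (2*m+2)‼ * Nat.factorial m
        = ((m+1) * catalan m) * ((2*m)‼ * m !) * 2 := by rw [h5]; ring
      _ = Nat.centralBinom m * (2^m * Nat.factorial m * Nat.factorial m) * 2 := by rw [h1, h4]
      _ = Nat.factorial (2*m) * 2^m * 2 := by rw [← h2]; ring
      _ = (2*m-1)‼ * 2^(2*m+1) * m ! := by
          rw [h3, h4]
          have : (2:ℕ)^(2*m+1) = 2^m * 2^m * 2 := by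
            rw [← pow_add, ← pow_succ]
            congr 1
            omega
          rw [this]; ring

lemma dfac_ratio (p : ℕ) (hp : 1 ≤ p) :
    ((2*p-3)‼ : ℝ) / ((2*p)‼ : ℝ) = (catalan (p-1) : ℝ) / 2^(2*p-1) := by
  obtain ⟨m, rfl⟩ : ∃ m, p = m + 1 := ⟨p - 1, by omega⟩
  have h := catkey m
  have e1 : 2*(m+1)-3 = 2*m-1 := by omega
  have e2 : 2*(m+1) = 2*m+2 := by omega
  have e3 : 2*(m+1)-1 = 2*m+1 := by omega
  rw [show (2*(m+1):ℕ) = 2*m+2 from by omega]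
  rw [show (2*m+2-3:ℕ) = 2*m-1 from by omega]
  rw [show (2*m+2-1:ℕ) = 2*m+1 from by omega]
  simp only [Nat.add_sub_cancel]
  have hd : (0:ℝ) < ((2*m+2)‼ : ℝ) := by exact_mod_cast Nat.doubleFactorial_pos _
  have hp2 : (0:ℝ) < (2:ℝ)^(2*m+1) := by positivity
  rw [div_eq_div_iff (ne_of_gt hd) (ne_of_gt hp2)]
  have := congrArg (Nat.cast : ℕ → ℝ) h
  push_cast at this ⊢
  linarith

lemma cc_eq (p : ℕ) (hp : 1 ≤ p) : cc p = -(((2*p-3)‼ : ℝ) / ((2*p)‼ : ℝ)) := by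
  rw [dfac_ratio p hp]
  simp only [cc, if_neg (by omega : ¬ p = 0)]

lemma pow_conv (p j : ℕ) (hpj : p ≤ j) :
    gam ^ p * gam' ^ (j - p) = gam ^ (2*(p:ℤ) - (j:ℤ)) := by
  rw [gam'_eq_inv, inv_pow, ← zpow_natCast gam p, ← zpow_natCast gam (j-p), ← zpow_neg,
      ← zpow_add₀ gam_ne]
  congr 1
  have : ((j - p : ℕ) : ℤ) = (j:ℤ) - (p:ℤ) := by
    push_cast [hpj]; ring
  rw [this]; ring

lemma gam_zpow_neg (j : ℕ) : gam' ^ j = gam ^ (-(j:ℤ)) := by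
  rw [gam'_eq_inv, inv_pow, ← zpow_natCast gam j, ← zpow_neg]

lemma key_T (j : ℕ) (hj : 2 ≤ j) : T j
    = cc j * (gam ^ (j:ℤ) + gam ^ (-(j:ℤ)))
      + ∑ p ∈ Finset.Icc 1 (j-1), cc p * cc (j-p) * gam ^ (2*(p:ℤ) - (j:ℤ)) := by
  show PowerSeries.coeff j (Sser gam * Sser gam') = _
  rw [coeff_mul_range]
  simp only [Sser, PowerSeries.coeff_mk]
  obtain ⟨m, rfl⟩ : ∃ m, j = m + 2 := ⟨j-2, by omega⟩
  rw [Finset.sum_range_succ _ (m+2), Finset.sum_range_succ' _ (m+1)]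
  have hIcc : ∑ p ∈ Finset.Icc 1 (m+2-1), cc p * cc (m+2-p) * gam ^ (2*(p:ℤ) - ((m+2:ℕ):ℤ))
      = ∑ k ∈ Finset.range (m+1),
          cc (k+1) * gam^(k+1) * (cc (m+2-(k+1)) * gam'^(m+2-(k+1))) := by
    rw [show m+2-1 = m+1 from rfl, ← Finset.Ico_add_one_right_eq_Icc, Finset.sum_Ico_eq_sum_range]
    rw [show m+1+1-1 = m+1 from rfl]
    apply Finset.sum_congr rfl
    intro k hk
    simp only [Finset.mem_range] at hk
    rw [show 1+k = k+1 from by omega]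
    rw [← pow_conv (k+1) (m+2) (by omega)]
    ring
  rw [hIcc]
  rw [Nat.sub_self, Nat.sub_zero, gam_zpow_neg, ← zpow_natCast gam (m+2)]
  simp only [cc_zero, pow_zero]
  ring

theorem stmt_17 (V : ℕ → ℝ) (hV0 : V 0 = 1)
    (hVrec : ∀ j : ℕ, V (j + 1) = (∑ i ∈ Finset.range (j + 1), V i * V (j - i)) + V j) :
    ∀ j : ℕ, 2 ≤ j →
      V (j - 1) = (1 / 2) *
        ((Nat.doubleFactorial (2 * j - 3) : ℝ) / (Nat.doubleFactorial (2 * j) : ℝ)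
            * ((3 - 2 * Real.sqrt 2) ^ (j : ℤ) + (3 - 2 * Real.sqrt 2) ^ (-(j : ℤ)))
          - ∑ p ∈ Finset.Icc 1 (j - 1),
              (Nat.doubleFactorial (2 * p - 3) : ℝ) / (Nat.doubleFactorial (2 * p) : ℝ)
                * ((Nat.doubleFactorial (2 * j - 2 * p - 3) : ℝ)
                    / (Nat.doubleFactorial (2 * j - 2 * p) : ℝ))
                * (3 - 2 * Real.sqrt 2) ^ (2 * (p : ℤ) - (j : ℤ))) := by
  intro j hj
  have hg : (3 - 2 * Real.sqrt 2 : ℝ) = gam := rfl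
  simp only [hg]
  have hT : T ((j-1)+1) = -2 * V (j-1) := T_eq_V V hV0 hVrec (j-1) (by omega)
  rw [show (j-1)+1 = j from by omega] at hT
  rw [key_T j hj] at hT
  have hccj : cc j = -(((2*j-3)‼:ℝ)/((2*j)‼:ℝ)) := cc_eq j (by omega)
  rw [hccj] at hT
  have hsum : ∀ p ∈ Finset.Icc 1 (j-1), cc p * cc (j-p) * gam ^ (2*(p:ℤ)-(j:ℤ))
      = ((2*p-3)‼:ℝ)/((2*p)‼:ℝ)
        * (((2*j-2*p-3)‼:ℝ)/((2*j-2*p)‼:ℝ)) * gam ^ (2*(p:ℤ)-(j:ℤ)) := by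
    intro p hp
    simp only [Finset.mem_Icc] at hp
    rw [cc_eq p hp.1, cc_eq (j-p) (by omega)]
    rw [show 2*(j-p) = 2*j-2*p from by omega]
    ring
  rw [Finset.sum_congr rfl hsum] at hT
  linarith
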